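/- (Direct reduction of the second flow.) Let c_0 ∈ ℝ, let I ⊆ ℝ be an open interval, and let σ : I → ℝ be twice differentiable with σ'(t) > 0 and σ''(t) = -2 c_0 σ'(t)^2 for all t ∈ I. Let ν : ℤ → ℝ be arbitrary and set η(n,t) = ν(n) + σ(t). Let H, G : ℝ → ℝ be differentiable and suppose that for all n ∈ ℤ and t ∈ I, writing η = η(n,t), η̄ = η(n+1,t), η̲ = η(n-1,t): -c_0 H(η) + H'(η) = H(η)(H(η̄)^2 - H(η̲)^2 + G(η̄)^2 - G(η)^2) and -c_0 G(η) + G'(η) = 2(H(η)^2 (G(η̄) + G(η)) - H(η̲)^2 (G(η) + G(η̲))). Then the functions u(n,t) := √(σ'(t)) · H(η(n,t)) and v(n,t) := √(σ'(t)) · G(η(n,t)) are differentiable in t and satisfy the second flow of the Toda hierarchy for all n ∈ ℤ and t ∈ I. -/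

import Mathlib

/-- Direct reduction of the second flow of the Toda hierarchy:
if `σ` solves `σ'' = -2c₀(σ')²` with `σ' > 0` on an open interval, `η(n,t) = ν(n) + σ(t)`,
and `H, G` solve the reduced second-flow delay-differential system, then
`u(n,t) = √(σ'(t)) H(η(n,t))`, `v(n,t) = √(σ'(t)) G(η(n,t))` solve the second flow
of the Toda hierarchy. -/
theorem direct_reduction_second_flow
    (c₀ a b : ℝ) (σ σ' σ'' : ℝ → ℝ)
    (hσ : ∀ t ∈ Set.Ioo a b, HasDerivAt σ (σ' t) t)
    (hσ' : ∀ t ∈ Set.Ioo a b, HasDerivAt σ' (σ'' t) t)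
    (hσpos : ∀ t ∈ Set.Ioo a b, 0 < σ' t)
    (hode : ∀ t ∈ Set.Ioo a b, σ'' t = -2 * c₀ * (σ' t)^2)
    (ν : ℤ → ℝ) (η : ℤ → ℝ → ℝ) (hη : ∀ (n : ℤ) (t : ℝ), η n t = ν n + σ t)
    (H G H' G' : ℝ → ℝ)
    (hH : ∀ x : ℝ, HasDerivAt H (H' x) x)
    (hG : ∀ x : ℝ, HasDerivAt G (G' x) x)
    (hred₁ : ∀ (n : ℤ), ∀ t ∈ Set.Ioo a b,
      -c₀ * H (η n t) + H' (η n t) =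
        H (η n t) * ((H (η (n+1) t))^2 - (H (η (n-1) t))^2
          + (G (η (n+1) t))^2 - (G (η n t))^2))
    (hred₂ : ∀ (n : ℤ), ∀ t ∈ Set.Ioo a b,
      -c₀ * G (η n t) + G' (η n t) =
        2 * ((H (η n t))^2 * (G (η (n+1) t) + G (η n t))
          - (H (η (n-1) t))^2 * (G (η n t) + G (η (n-1) t))))
    (u v : ℤ → ℝ → ℝ)
    (hu : ∀ (n : ℤ) (t : ℝ), u n t = Real.sqrt (σ' t) * H (η n t))
    (hv : ∀ (n : ℤ) (t : ℝ), v n t = Real.sqrt (σ' t) * G (η n t)) :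
    ∀ (n : ℤ), ∀ t ∈ Set.Ioo a b,
      HasDerivAt (fun s => u n s)
        (u n t * ((u (n+1) t)^2 - (u (n-1) t)^2 + (v (n+1) t)^2 - (v n t)^2)) t ∧
      HasDerivAt (fun s => v n s)
        (2 * ((u n t)^2 * (v (n+1) t + v n t)
          - (u (n-1) t)^2 * (v n t + v (n-1) t))) t := by
  intro n t ht
  have hs := hσ t ht
  have hs' := hσ' t ht
  have hp := hσpos t ht
  set r := Real.sqrt (σ' t) with hrdef
  have hrpos : 0 < r := Real.sqrt_pos.mpr hp
  have hr : r ≠ 0 := ne_of_gt hrpos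
  have hr2 : r ^ 2 = σ' t := Real.sq_sqrt hp.le
  have hsq : HasDerivAt (fun s => Real.sqrt (σ' s)) (σ'' t / (2 * r)) t := by
    have h := (Real.hasDerivAt_sqrt (ne_of_gt hp)).comp t hs'
    rw [hrdef]
    simpa [div_eq_mul_inv, mul_comm, Function.comp_def] using h
  have key : ∀ (F F' : ℝ → ℝ), (∀ x, HasDerivAt F (F' x) x) →
      HasDerivAt (fun s => Real.sqrt (σ' s) * F (η n s))
        (σ'' t / (2 * r) * F (η n t) + r * (F' (η n t) * σ' t)) t := by
    intro F F' hF
    have hηd : HasDerivAt (fun s => η n s) (σ' t) t := by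
      have h := hs.const_add (ν n)
      apply h.congr_of_eventuallyEq
      filter_upwards with s using (hη n s)
    exact hsq.mul ((hF _).comp t hηd)
  constructor
  · have h1 := key H H' hH
    have hfun : (fun s => u n s) = fun s => Real.sqrt (σ' s) * H (η n s) :=
      funext fun s => hu n s
    rw [hfun]
    convert h1 using 1
    rw [hu, hu, hu, hv, hv, hode t ht, ← hr2]
    have e1 := hred₁ n t ht
    field_simp
    rw [Real.sqrt_sq hrpos.le]
    linear_combination (-(r ^ 3)) * e1
  · have h1 := key G G' hG
    have hfun : (fun s => v n s) = fun s => Real.sqrt (σ' s) * G (η n s) :=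
      funext fun s => hv n s
    rw [hfun]
    convert h1 using 1
    rw [hu, hu, hv, hv, hv, hode t ht, ← hr2]
    have e2 := hred₂ n t ht
    field_simp
    rw [Real.sqrt_sq hrpos.le]
    linear_combination (-(r ^ 3)) * e2
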